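/- arXiv:2112.11672 — 3 statements merged into one kernel-verified Lean document; each statement's English description precedes it below -/
import Mathlib

section
/- Let $a, b \in \mathbb{Q}$ and let $L = \sum_{j \geq 1} \ell_j t^j \in \mathbb{Q}[[t]]$ be a formal power series with zero constant term. Then the identity $\exp(-L) = \sum_{k=0}^{\infty} (-1)^k \big(\prod_{m=0}^{k-1}(a+mb)\big)\, t^k$ holds in $\mathbb{Q}[[t]]$ if and only if $\exp(L) = 1 + a\,t - b\,t^2\,L'(t)$ holds in $\mathbb{Q}[[t]]$, where $L'$ denotes the formal derivative of $L$ and the empty product (for $k=0$) equals $1$. (This is the paper's Definition-Lemma asserting the equivalence of its two definitions of the sequence $\ell^v_j$ for $v=(a,b)$.) -/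
open PowerSeries

/-- Substitution of a formal power series `L` (with zero constant term) into the
exponential power series `exp(u) = ∑ uⁿ/n!`: the `n`-th coefficient of `exp(L)` is
`∑_{k=0}^{n} (coefficient n of L^k) / k!` (terms with `k > n` vanish since `L` has
zero constant term). -/
noncomputable def expSubst (L : ℚ⟦X⟧) : ℚ⟦X⟧ :=
  PowerSeries.mk fun n => ∑ k ∈ Finset.range (n + 1), coeff n (L ^ k) / k.factorial

lemma coeff_pow_zero_of_lt {M : ℚ⟦X⟧} (hM : constantCoeff M = 0) {n k : ℕ} (h : n < k) :
    coeff n (M ^ k) = 0 := by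
  have hd : (X : ℚ⟦X⟧) ^ k ∣ M ^ k := pow_dvd_pow_of_dvd (X_dvd_iff.mpr hM) k
  exact X_pow_dvd_iff.mp hd n h

lemma constantCoeff_expSubst (M : ℚ⟦X⟧) : constantCoeff (expSubst M) = 1 := by
  rw [← coeff_zero_eq_constantCoeff_apply, expSubst, coeff_mk]
  simp

lemma coeff_expSubst_ext {M : ℚ⟦X⟧} (hM : constantCoeff M = 0) (n N : ℕ) (hN : n < N) :
    coeff n (expSubst M) = ∑ k ∈ Finset.range N, coeff n (M ^ k) / k.factorial := by
  rw [expSubst, coeff_mk]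
  apply Finset.sum_subset
  · exact Finset.range_subset_range.mpr hN
  · intro k _ hk
    rw [coeff_pow_zero_of_lt hM (Nat.lt_of_succ_le (Nat.not_lt.mp (by simpa using hk))), zero_div]

lemma derivative_expSubst {M : ℚ⟦X⟧} (hM : constantCoeff M = 0) :
    derivative ℚ (expSubst M) = derivative ℚ M * expSubst M := by
  ext n
  rw [coeff_derivative, coeff_expSubst_ext hM (n+1) (n+2) (Nat.lt_succ_self _)]
  rw [coeff_mul]
  have hrhs : ∀ p ∈ Finset.HasAntidiagonal.antidiagonal n,
      coeff p.1 (derivative ℚ M) * coeff p.2 (expSubst M)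
      = ∑ k ∈ Finset.range (n+1), coeff p.1 (derivative ℚ M) * (coeff p.2 (M ^ k) / k.factorial) := by
    intro p hp
    rw [coeff_expSubst_ext hM p.2 (n+1)
      (Nat.lt_succ_of_le (Finset.HasAntidiagonal.antidiagonal.snd_le hp)), Finset.mul_sum]
  rw [Finset.sum_congr rfl hrhs, Finset.sum_comm]
  have key : ∀ k, ∑ p ∈ Finset.HasAntidiagonal.antidiagonal n,
      coeff p.1 (derivative ℚ M) * (coeff p.2 (M ^ k) / k.factorial)
      = coeff (n+1) (M ^ (k+1)) * (n+1) / (k+1).factorial := by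
    intro k
    have h1 : ∑ p ∈ Finset.HasAntidiagonal.antidiagonal n,
        coeff p.1 (derivative ℚ M) * (coeff p.2 (M ^ k) / k.factorial)
        = (coeff n (derivative ℚ M * M ^ k)) / k.factorial := by
      rw [coeff_mul, Finset.sum_div]
      exact Finset.sum_congr rfl fun p _ => by ring
    have h2 : derivative ℚ (M ^ (k+1)) = (k+1 : ℕ) • (M ^ k * derivative ℚ M) := by
      have := Derivation.leibniz_pow (derivative ℚ) (a := M) (k+1)
      simpa [smul_smul, smul_eq_mul, mul_comm] using this
    have h3 : coeff n (derivative ℚ M * M ^ k)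
        = coeff (n+1) (M ^ (k+1)) * (n+1) / (k+1) := by
      have h4 := coeff_derivative (M ^ (k+1)) n
      rw [h2, map_nsmul] at h4
      have h5 : ((k:ℚ)+1) * coeff n (M ^ k * derivative ℚ M) = coeff (n+1) (M^(k+1)) * (n+1) := by
        rw [← h4]; push_cast [nsmul_eq_mul]; ring
      have hk1 : ((k:ℚ)+1) ≠ 0 := by positivity
      rw [mul_comm (derivative ℚ M)]
      field_simp
      linarith [h5]
    rw [h1, h3]
    rw [Nat.factorial_succ]
    push_cast
    field_simp
  rw [Finset.sum_congr rfl (fun k _ => key k)]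
  rw [Finset.sum_range_succ' (fun k => coeff (n+1) (M ^ k) / k.factorial) (n+1)]
  simp only [pow_zero, Nat.factorial_zero, Nat.cast_one, div_one]
  rw [coeff_one]
  simp only [Nat.succ_ne_zero, if_false, add_zero]
  rw [Finset.sum_mul]
  exact Finset.sum_congr rfl fun k _ => by push_cast; ring

lemma expSubst_mul_neg {L : ℚ⟦X⟧} (hL : constantCoeff L = 0) :
    expSubst L * expSubst (-L) = 1 := by
  have hnL : constantCoeff (-L) = 0 := by rw [map_neg, hL, neg_zero]
  apply derivative.ext
  · rw [Derivation.leibniz, smul_eq_mul, smul_eq_mul, derivative_expSubst hL,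
      derivative_expSubst hnL, map_neg, Derivation.map_one_eq_zero]
    ring
  · rw [map_mul, constantCoeff_expSubst, constantCoeff_expSubst, map_one, one_mul]

/-- The operator `Φ(P) = P + a·X·P + b·X²·P'`. -/
noncomputable def phi (a b : ℚ) (P : ℚ⟦X⟧) : ℚ⟦X⟧ :=
  P + C a * X * P + C b * X ^ 2 * derivative ℚ P

lemma coeff_phi_zero (a b : ℚ) (P : ℚ⟦X⟧) : coeff 0 (phi a b P) = coeff 0 P := by
  simp [phi, mul_assoc, mul_comm (C a) X, mul_comm (C b) (X^2), pow_two, mul_assoc,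
    coeff_zero_eq_constantCoeff_apply]

lemma coeff_phi_succ (a b : ℚ) (P : ℚ⟦X⟧) (n : ℕ) :
    coeff (n+1) (phi a b P) = coeff (n+1) P + (a + n * b) * coeff n P := by
  have h1 : C a * X * P = X * (C a * P) := by ring
  have h2 : C b * X ^ 2 * derivative ℚ P = X ^ 2 * (C b * derivative ℚ P) := by ring
  rw [phi, map_add, map_add, h1, h2, coeff_succ_X_mul, coeff_C_mul]
  cases n with
  | zero =>
    rw [coeff_X_pow_mul' (C b * derivative ℚ P) 2 1]
    simp
  | succ m =>
    rw [show m + 1 + 1 = m + 2 from rfl, coeff_X_pow_mul (C b * derivative ℚ P) 2 m,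
      coeff_C_mul, coeff_derivative]
    push_cast
    ring

lemma phi_injective (a b : ℚ) {P Q : ℚ⟦X⟧} (h : phi a b P = phi a b Q) : P = Q := by
  ext n
  induction n with
  | zero =>
    have := congrArg (coeff 0) h
    rwa [coeff_phi_zero, coeff_phi_zero] at this
  | succ m ih =>
    have := congrArg (coeff (m+1)) h
    rw [coeff_phi_succ, coeff_phi_succ, ih] at this
    linarith [this]

lemma phi_F (a b : ℚ) :
    phi a b (PowerSeries.mk fun k => (-1 : ℚ) ^ k * ∏ m ∈ Finset.range k, (a + (m : ℚ) * b)) = 1 := by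
  set F := PowerSeries.mk fun k => (-1 : ℚ) ^ k * ∏ m ∈ Finset.range k, (a + (m : ℚ) * b) with hF
  ext n
  cases n with
  | zero => rw [coeff_phi_zero, hF, coeff_mk]; simp
  | succ m =>
    rw [coeff_phi_succ, hF, coeff_mk, coeff_mk, coeff_one]
    simp only [Nat.succ_ne_zero, if_false]
    rw [Finset.prod_range_succ, pow_succ]
    ring

lemma phi_G (a b : ℚ) {L : ℚ⟦X⟧} (hL : constantCoeff L = 0) :
    phi a b (expSubst (-L)) = expSubst (-L) * (1 + C a * X - C b * X ^ 2 * derivative ℚ L) := by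
  have hnL : constantCoeff (-L) = 0 := by rw [map_neg, hL, neg_zero]
  rw [phi, derivative_expSubst hnL, map_neg]
  ring

/-- For `a b : ℚ` and `L = ∑_{j≥1} ℓ_j t^j ∈ ℚ⟦t⟧` with zero constant
term, `exp(-L) = ∑ₖ (-1)^k (∏_{m=0}^{k-1}(a+mb)) t^k` holds iff
`exp(L) = 1 + a t - b t² L'(t)` holds. -/
theorem stmt1 (a b : ℚ) (L : ℚ⟦X⟧) (hL : constantCoeff L = 0) :
    expSubst (-L) =
        (PowerSeries.mk fun k => (-1 : ℚ) ^ k * ∏ m ∈ Finset.range k, (a + (m : ℚ) * b)) ↔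
      expSubst L = 1 + C a * X - C b * X ^ 2 * derivative ℚ L := by
  set G := expSubst (-L)
  set E := expSubst L
  set S := 1 + C a * X - C b * X ^ 2 * derivative ℚ L with hS
  have hGE : E * G = 1 := expSubst_mul_neg hL
  constructor
  · intro hA
    have h1 : phi a b G = 1 := by rw [hA, phi_F]
    have h2 : G * S = 1 := by rw [← phi_G a b hL]; exact h1
    calc E = E * (G * S) := by rw [h2, mul_one]
    _ = (E * G) * S := by ring
    _ = S := by rw [hGE, one_mul]
  · intro hB
    apply phi_injective a b
    rw [phi_F, phi_G a b hL, ← hS, ← hB, mul_comm]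
    exact hGE
end

section
/- For every real $\epsilon > 0$ and every real $z$ with $|z| < \sqrt{2\epsilon}$, the series $\epsilon^{-1} \sum_{k=0}^{\infty} (-1)^k\, k!\, \epsilon^{-k}\, \frac{z^{2k+1}}{(2k+1)!!}$ converges and equals $\frac{2\, \operatorname{arsinh}(z/\sqrt{2\epsilon})}{\sqrt{z^2 + 2\epsilon}}$. (This is the paper's closed form for the $y$-function of the rescaled spectral curve associated with the class $\mathbb{J}$.) -/
open scoped Nat
open Filter Topology

set_option maxHeartbeats 1000000

/-- coefficient of the core series -/
noncomputable def stmt7Aux (k : ℕ) : ℝ :=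
  (-1) ^ k * 2 ^ k * k.factorial / ((2 * k + 1)‼ : ℝ)

lemma stmt7Aux_dfac_pos (k : ℕ) : (0:ℝ) < ((2 * k + 1)‼ : ℝ) := by
  exact_mod_cast Nat.doubleFactorial_pos _

lemma stmt7Aux_rec (k : ℕ) :
    (2 * (k:ℝ) + 3) * stmt7Aux (k+1) = -(2 * k + 2) * stmt7Aux k := by
  have h : (2 * (k+1) + 1)‼ = (2 * k + 3) * (2 * k + 1)‼ := by
    have h2 : 2 * (k+1) + 1 = (2*k+1) + 2 := by ring
    rw [h2, Nat.doubleFactorial_add_two]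
  have h1 : ((2*k+1)‼ : ℝ) ≠ 0 := (stmt7Aux_dfac_pos k).ne'
  unfold stmt7Aux
  rw [h]
  push_cast [Nat.factorial_succ]
  field_simp
  ring

lemma stmt7Aux_succ (k : ℕ) :
    stmt7Aux (k+1) = -(2 * (k:ℝ) + 2) / (2 * k + 3) * stmt7Aux k := by
  have h3 : (0:ℝ) < 2*(k:ℝ)+3 := by positivity
  have := stmt7Aux_rec k
  field_simp
  linarith [this]

lemma stmt7Aux_abs_le (k : ℕ) : |stmt7Aux k| ≤ 1 := by
  induction k with
  | zero => simp [stmt7Aux]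
  | succ k ih =>
    rw [stmt7Aux_succ, abs_mul]
    have h3 : (0:ℝ) < 2*(k:ℝ)+3 := by positivity
    have h : |(-(2 * (k:ℝ) + 2) / (2 * k + 3))| ≤ 1 := by
      rw [abs_div, abs_neg, abs_of_nonneg (by positivity), abs_of_nonneg (by positivity),
        div_le_one h3]
      linarith
    calc |(-(2 * (k:ℝ) + 2) / (2 * k + 3))| * |stmt7Aux k| ≤ 1 * 1 :=
          mul_le_mul h ih (abs_nonneg _) zero_le_one
      _ = 1 := one_mul 1

lemma stmt7_alg (q y A B C : ℝ) (hq : q ≠ 0) (hq2 : q * q = 1 + y^2)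
    (h : y * A + (1 + y^2) * B = 1 + C) :
    C / q = 1 / (2*q) * (2*y) * A + q * B - q⁻¹ := by
  have hC : C = y * A + (1 + y^2) * B - 1 := by linarith
  rw [hC, ← hq2]
  field_simp

set_option maxHeartbeats 1000000 in
lemma stmt7_ident (n : ℕ) (x : ℝ) :
    x * (∑ k ∈ Finset.range (n+1), stmt7Aux k * x ^ (2*k+1))
      + (1 + x^2) * (∑ k ∈ Finset.range (n+1), (2*(k:ℝ)+1) * stmt7Aux k * x ^ (2*k))
    = 1 + (2*(n:ℝ)+2) * stmt7Aux n * x ^ (2*n+2) := by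
  induction n with
  | zero => simp [stmt7Aux]; ring
  | succ n ih =>
    rw [Finset.sum_range_succ, Finset.sum_range_succ
      (f := fun k => (2*(k:ℝ)+1) * stmt7Aux k * x ^ (2*k))]
    have hrec := stmt7Aux_rec n
    push_cast
    linear_combination ih + x^(2*n+2) * hrec + (x^(2*n+2) * x^2 - x^(2*(n+1)+2)) * hrec

set_option maxHeartbeats 2000000 in
lemma stmt7_core (x : ℝ) (hx : |x| < 1) :
    HasSum (fun k : ℕ => stmt7Aux k * x ^ (2 * k + 1))
      (Real.arsinh x / Real.sqrt (1 + x ^ 2)) := by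
  have hx2 : x^2 < 1 := by
    have := abs_nonneg x
    nlinarith [sq_abs x]
  have hsummable : Summable fun k : ℕ => ‖stmt7Aux k * x ^ (2*k+1)‖ := by
    refine Summable.of_nonneg_of_le (fun k => norm_nonneg _) (fun k => ?_)
      ((summable_geometric_of_lt_one (sq_nonneg x) hx2).mul_left |x|)
    · 
      have : ‖stmt7Aux k * x ^ (2*k+1)‖ = |stmt7Aux k| * |x|^(2*k+1) := by
        rw [norm_mul, norm_pow]; rfl
      rw [this]
      have h1 : |x|^(2*k+1) = |x| * (x^2)^k := by
        rw [pow_succ', pow_mul, sq_abs]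
      rw [h1]
      exact mul_le_of_le_one_left (by positivity) (stmt7Aux_abs_le k)
  rw [hasSum_iff_tendsto_nat_of_summable_norm hsummable]
  -- the partial sums and their derivatives
  set S : ℕ → ℝ → ℝ := fun n y => ∑ k ∈ Finset.range n, stmt7Aux k * y ^ (2*k+1) with hS
  set F : ℕ → ℝ → ℝ := fun n y => Real.sqrt (1 + y^2) * S (n+1) y - Real.arsinh y with hF
  have hsq : ∀ y : ℝ, (0:ℝ) < 1 + y^2 := fun y => by positivity
  have hsqrt_pos : ∀ y : ℝ, 0 < Real.sqrt (1 + y^2) := fun y => Real.sqrt_pos.2 (hsq y)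
  have hsqrt_one : ∀ y : ℝ, 1 ≤ Real.sqrt (1 + y^2) := fun y =>
    Real.one_le_sqrt.2 (by nlinarith [sq_nonneg y])
  have hFderiv : ∀ (n : ℕ) (y : ℝ), HasDerivAt (F n)
      ((2*(n:ℝ)+2) * stmt7Aux n * y ^ (2*n+2) / Real.sqrt (1 + y^2)) y := by
    intro n y
    have h1 : HasDerivAt (fun t : ℝ => 1 + t^2) (2*y) y := by
      simpa using (hasDerivAt_pow 2 y).const_add 1
    have h2 : HasDerivAt (fun t : ℝ => Real.sqrt (1 + t^2))
        (1 / (2 * Real.sqrt (1 + y^2)) * (2*y)) y :=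
      (Real.hasDerivAt_sqrt (hsq y).ne').comp y h1
    have h3 : HasDerivAt (S (n+1))
        (∑ k ∈ Finset.range (n+1), (2*(k:ℝ)+1) * stmt7Aux k * y ^ (2*k)) y := by
      apply HasDerivAt.fun_sum
      intro k _
      have := (hasDerivAt_pow (2*k+1) y).const_mul (stmt7Aux k)
      refine this.congr_deriv ?_
      push_cast
      ring_nf
    have h4 := ((h2.mul h3).sub (Real.hasDerivAt_arsinh y))
    refine h4.congr_deriv ?_
    have hne := (hsqrt_pos y).ne'
    have hsq' : Real.sqrt (1 + y^2) * Real.sqrt (1 + y^2) = 1 + y^2 :=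
      Real.mul_self_sqrt (hsq y).le
    have hident : y * S (n+1) y
        + (1 + y^2) * (∑ k ∈ Finset.range (n+1), (2*(k:ℝ)+1) * stmt7Aux k * y ^ (2*k))
        = 1 + (2*(n:ℝ)+2) * stmt7Aux n * y ^ (2*n+2) := by
      simp only [hS]
      exact stmt7_ident n y
    exact (stmt7_alg _ _ _ _ _ hne hsq' hident).symm
  have hF0 : ∀ n, F n 0 = 0 := by
    intro n
    simp [hF, hS]
  have hFbound : ∀ n : ℕ, |F n x| ≤ ((2*(n:ℝ)+2) * |x|^(2*n+2)) * |x| := by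
    intro n
    have hconv : Convex ℝ (Set.Icc (-|x|) (|x| : ℝ)) := convex_Icc _ _
    have hmem0 : (0:ℝ) ∈ Set.Icc (-|x|) (|x|:ℝ) :=
      ⟨neg_nonpos.2 (abs_nonneg x), abs_nonneg x⟩
    have hmemx : x ∈ Set.Icc (-|x|) (|x|:ℝ) := ⟨neg_abs_le x, le_abs_self x⟩
    have := hconv.norm_image_sub_le_of_norm_hasDerivWithin_le
      (f := F n)
      (f' := fun y => (2*(n:ℝ)+2) * stmt7Aux n * y ^ (2*n+2) / Real.sqrt (1 + y^2))
      (C := (2*(n:ℝ)+2) * |x|^(2*n+2))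
      (fun y _ => (hFderiv n y).hasDerivWithinAt)
      (fun y hy => by
        have hyx : |y| ≤ |x| := abs_le.2 ⟨hy.1, hy.2⟩
        have h1 : ‖(2*(n:ℝ)+2) * stmt7Aux n * y ^ (2*n+2) / Real.sqrt (1 + y^2)‖
            = (2*(n:ℝ)+2) * |stmt7Aux n| * |y|^(2*n+2) / Real.sqrt (1 + y^2) := by
          rw [Real.norm_eq_abs, abs_div, abs_mul, abs_mul, abs_pow,
            abs_of_pos (hsqrt_pos y), abs_of_nonneg (by positivity : (0:ℝ) ≤ 2*(n:ℝ)+2)]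
        rw [h1]
        have h2 : (2*(n:ℝ)+2) * |stmt7Aux n| * |y|^(2*n+2) / Real.sqrt (1 + y^2)
            ≤ (2*(n:ℝ)+2) * |stmt7Aux n| * |y|^(2*n+2) := by
          apply div_le_self (by positivity) (hsqrt_one y)
        refine h2.trans ?_
        have h3 : |y|^(2*n+2) ≤ |x|^(2*n+2) := pow_le_pow_left₀ (abs_nonneg y) hyx _
        have h4 := stmt7Aux_abs_le n
        have h5 : (2*(n:ℝ)+2) * |stmt7Aux n| * |y| ^ (2*n+2)
            ≤ (2*(n:ℝ)+2) * 1 * |x| ^ (2*n+2) := by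
          gcongr <;> first | exact h4 | exact hyx | positivity
        linarith)
      hmem0 hmemx
    calc |F n x| = ‖F n x - F n 0‖ := by rw [hF0, sub_zero, Real.norm_eq_abs]
      _ ≤ ((2*(n:ℝ)+2) * |x|^(2*n+2)) * ‖x - 0‖ := this
      _ = ((2*(n:ℝ)+2) * |x|^(2*n+2)) * |x| := by rw [sub_zero, Real.norm_eq_abs]
  -- the bound tends to 0
  have hbound0 : Tendsto (fun n : ℕ => ((2*(n:ℝ)+2) * |x|^(2*n+2)) * |x|) atTop (𝓝 0) := by
    have hr : ‖x^2‖ < 1 := by rwa [Real.norm_eq_abs, abs_of_nonneg (sq_nonneg x)]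
    have h1 : Tendsto (fun n : ℕ => (n:ℝ) * (x^2)^n) atTop (𝓝 0) := by
      have := (summable_norm_pow_mul_geometric_of_norm_lt_one 1 hr).of_norm
      simpa using this.tendsto_atTop_zero
    have h2 : Tendsto (fun n : ℕ => (x^2)^n) atTop (𝓝 0) :=
      tendsto_pow_atTop_nhds_zero_of_lt_one (sq_nonneg x) hx2
    have h3 : Tendsto (fun n : ℕ =>
        (2*|x|^3) * ((n:ℝ) * (x^2)^n) + (2*|x|^3) * (x^2)^n) atTop (𝓝 0) := by
      have := ((h1.const_mul (2*|x|^3)).add (h2.const_mul (2*|x|^3)))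
      simpa using this
    convert h3 using 2 with n
    have : |x|^(2*n+2) = |x|^2 * (x^2)^n := by
      rw [pow_add, pow_mul, sq_abs]; ring
    rw [this]
    ring
  have hFtend : Tendsto (fun n : ℕ => F n x) atTop (𝓝 0) :=
    squeeze_zero_norm (fun n => by simpa using hFbound n) hbound0
  -- conclude
  have hStend : Tendsto (fun n : ℕ => S (n+1) x) atTop
      (𝓝 (Real.arsinh x / Real.sqrt (1 + x^2))) := by
    have h1 : ∀ n : ℕ, S (n+1) x = (F n x + Real.arsinh x) / Real.sqrt (1 + x^2) := by
      intro n
      rw [hF]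
      field_simp
      ring
    simp only [h1]
    have := (hFtend.add_const (Real.arsinh x)).div_const (Real.sqrt (1 + x^2))
    simpa using this
  have hfinal := (tendsto_add_atTop_iff_nat (f := fun n => S n x) 1).1 hStend
  exact hfinal

/-- For every real `ε > 0` and every real `z` with `|z| < √(2ε)`, the
series `ε⁻¹ ∑ₖ (-1)^k k! ε⁻ᵏ z^{2k+1}/(2k+1)!!` converges to
`2 arsinh(z/√(2ε)) / √(z² + 2ε)`. -/
theorem stmt7 (ε : ℝ) (hε : 0 < ε) (z : ℝ) (hz : |z| < Real.sqrt (2 * ε)) :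
    HasSum
      (fun k : ℕ =>
        ε⁻¹ * ((-1 : ℝ) ^ k * k.factorial * ε⁻¹ ^ k * z ^ (2 * k + 1) / ((2 * k + 1)‼ : ℝ)))
      (2 * Real.arsinh (z / Real.sqrt (2 * ε)) / Real.sqrt (z ^ 2 + 2 * ε)) := by
  set s := Real.sqrt (2 * ε) with hsdef
  have hs : 0 < s := Real.sqrt_pos.2 (by linarith)
  have hss : s * s = 2 * ε := Real.mul_self_sqrt (by linarith)
  have hx : |z / s| < 1 := by
    rw [abs_div, abs_of_pos hs, div_lt_one hs]
    exact hz
  have H := (stmt7_core (z / s) hx).mul_left (2 / s)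
  have hfun : (fun k : ℕ =>
      ε⁻¹ * ((-1 : ℝ) ^ k * k.factorial * ε⁻¹ ^ k * z ^ (2 * k + 1) / ((2 * k + 1)‼ : ℝ)))
      = fun k : ℕ => 2 / s * (stmt7Aux k * (z / s) ^ (2 * k + 1)) := by
    funext k
    have hdf : ((2*k+1)‼ : ℝ) ≠ 0 := (stmt7Aux_dfac_pos k).ne'
    have hs21 : s ^ (2*k+1) = (s*s)^k * s := by
      rw [pow_succ, pow_mul, sq]
    have hs2 : s ^ 2 = 2 * ε := by rw [sq]; exact hss
    rw [div_pow, hs21, hss]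
    unfold stmt7Aux
    have hε' : ε = s * s / 2 := by linarith
    rw [hε']
    field_simp
    ring_nf
    have hsk : s ^ (k*2) * s⁻¹ ^ (k*2) = 1 := by rw [← mul_pow, mul_inv_cancel₀ hs.ne', one_pow]
    rw [hsk, one_mul]
  have hval : 2 * Real.arsinh (z / s) / Real.sqrt (z ^ 2 + 2 * ε)
      = 2 / s * (Real.arsinh (z / s) / Real.sqrt (1 + (z / s) ^ 2)) := by
    have h1 : 1 + (z / s)^2 = (z^2 + 2*ε) / (s*s) := by
      rw [div_pow, sq]
      field_simp
      linear_combination hss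
    have h2 : Real.sqrt (1 + (z/s)^2) = Real.sqrt (z^2 + 2*ε) / s := by
      rw [h1, ← sq, Real.sqrt_div (by positivity), Real.sqrt_sq hs.le]
    rw [h2]
    have h3 : 0 < Real.sqrt (z^2 + 2*ε) := Real.sqrt_pos.2 (by positivity)
    field_simp
  rw [hfun, hval]
  exact H
end

section
/- For each fixed real $\epsilon > 0$, the function $z \mapsto \frac{\sqrt{z^2 + 2\epsilon}}{2\, \operatorname{arsinh}(z/\sqrt{2\epsilon})}$ admits the Laurent-type asymptotic expansion $\frac{\sqrt{z^2+2\epsilon}}{2\,\operatorname{arsinh}(z/\sqrt{2\epsilon})} = \frac{\epsilon}{z} + \frac{z}{3} - \frac{z^3}{45\,\epsilon} + \frac{z^5}{189\,\epsilon^2} - \frac{23\, z^7}{14175\,\epsilon^3} + O(z^9)$ as $z \to 0$ through nonzero real values. (This is the paper's expansion of $y^{-1}$ for the spectral curve of the class $\mathbb{J}$, showing that its Laurent coefficients in $z$ are not regular in $\epsilon$.) -/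
open Asymptotics Filter Topology

/-- Taylor polynomial of `arsinh` to degree 9. -/
noncomputable def stmt11T (u : ℝ) : ℝ :=
  u - u ^ 3 / 6 + 3 * u ^ 5 / 40 - 5 * u ^ 7 / 112 + 35 * u ^ 9 / 1152

/-- Taylor polynomial of `(√(1+u²))⁻¹` to degree 8 (derivative of `stmt11T`). -/
noncomputable def stmt11p (u : ℝ) : ℝ :=
  1 - u ^ 2 / 2 + 3 * u ^ 4 / 8 - 5 * u ^ 6 / 16 + 35 * u ^ 8 / 128

/-- The (rescaled) candidate expansion polynomial. -/
noncomputable def stmt11q (u : ℝ) : ℝ :=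
  1 / 2 + u ^ 2 / 3 - 2 * u ^ 4 / 45 + 4 * u ^ 6 / 189 - 184 * u ^ 8 / 14175

/-- Remainder polynomial: `u²(1+u²) - 4 q(u)² T(u)² = u¹² * R₂(u)`. -/
noncomputable def stmt11R2 (u : ℝ) : ℝ :=
  (-47689/5443200) - (24630553/762048000) * u ^ 2 + (7346789/508032000) * u ^ 4 -
    (83536987/10450944000) * u ^ 6 + (85879153/18289152000) * u ^ 8 -
    (14962184431/7407106560000) * u ^ 10 + (7608900121/10802030400000) * u ^ 12 -
    (588633221821/2268426384000000) * u ^ 14 + (1395300013/17013197880000) * u ^ 16 -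
    (123180641/7561421280000) * u ^ 18 + (53567/13888324800) * u ^ 20 -
    (529/850305600) * u ^ 22

lemma stmt11T_hasDerivAt (t : ℝ) : HasDerivAt stmt11T (stmt11p t) t := by
  have h :=
    ((((hasDerivAt_id t).sub ((hasDerivAt_pow 3 t).div_const 6)).add
          (((hasDerivAt_pow 5 t).const_mul (3 : ℝ)).div_const 40)).sub
        (((hasDerivAt_pow 7 t).const_mul (5 : ℝ)).div_const 112)).add
      (((hasDerivAt_pow 9 t).const_mul (35 : ℝ)).div_const 1152)
  have h2 : (fun x : ℝ => id x - x ^ 3 / 6 + 3 * x ^ 5 / 40 - 5 * x ^ 7 / 112 +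
      35 * x ^ 9 / 1152) = stmt11T := by
    funext x; simp only [id_eq, stmt11T]
  replace h : HasDerivAt (fun x : ℝ => id x - x ^ 3 / 6 + 3 * x ^ 5 / 40 - 5 * x ^ 7 / 112 +
      35 * x ^ 9 / 1152) _ t := h
  rw [h2] at h
  convert h using 1
  unfold stmt11p
  push_cast
  ring

set_option maxHeartbeats 1000000 in
lemma stmt11_deriv_bound {t : ℝ} (ht : |t| ≤ 1 / 2) :
    |(Real.sqrt (1 + t ^ 2))⁻¹ - stmt11p t| ≤ |t| ^ 10 := by
  have ht2 : t ^ 2 ≤ 1 / 4 := by nlinarith [sq_abs t, abs_nonneg t]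
  have h0 : (0 : ℝ) ≤ t ^ 2 := sq_nonneg t
  have h4n : (0 : ℝ) ≤ t ^ 4 := by positivity
  have h6n : (0 : ℝ) ≤ t ^ 6 := by positivity
  have h8n : (0 : ℝ) ≤ t ^ 8 := by positivity
  have h4 : t ^ 4 ≤ 1 / 16 := by nlinarith
  have h6 : t ^ 6 ≤ 1 / 64 := by nlinarith
  have h8 : t ^ 8 ≤ 1 / 256 := by nlinarith
  set c := Real.sqrt (1 + t ^ 2) with hc
  have hc2 : c ^ 2 = 1 + t ^ 2 := Real.sq_sqrt (by positivity)
  have hc1 : (1 : ℝ) ≤ c := by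
    rw [show (1 : ℝ) = Real.sqrt 1 by simp, hc]
    exact Real.sqrt_le_sqrt (by nlinarith)
  have hcne : c ≠ 0 := by linarith
  have hp : 0 ≤ stmt11p t := by unfold stmt11p; nlinarith
  have hden : (1 : ℝ) ≤ c * (1 + stmt11p t * c) := by
    nlinarith [mul_nonneg hp (by linarith : (0:ℝ) ≤ c)]
  have hdpos : (0 : ℝ) < c * (1 + stmt11p t * c) := by linarith
  have expand : (c⁻¹ - stmt11p t) * (c * (1 + stmt11p t * c)) =
      1 - (stmt11p t) ^ 2 * (1 + t ^ 2) := by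
    linear_combination (1 + stmt11p t * c) * inv_mul_cancel₀ hcne - (stmt11p t) ^ 2 * hc2
  have habs : |c⁻¹ - stmt11p t| * (c * (1 + stmt11p t * c)) =
      |1 - (stmt11p t) ^ 2 * (1 + t ^ 2)| := by
    rw [← abs_of_pos hdpos, ← abs_mul, expand]
  have hr : |1 - (stmt11p t) ^ 2 * (1 + t ^ 2)| ≤ |t| ^ 10 := by
    have id1 : 1 - (stmt11p t) ^ 2 * (1 + t ^ 2) =
        t ^ 10 * (-63 / 128 + 105 / 512 * t ^ 2 - 135 / 1024 * t ^ 4 +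
          1575 / 16384 * t ^ 6 - 1225 / 16384 * t ^ 8) := by
      unfold stmt11p; ring
    rw [id1, abs_mul, abs_pow]
    have hr1 : |(-63 / 128 + 105 / 512 * t ^ 2 - 135 / 1024 * t ^ 4 +
        1575 / 16384 * t ^ 6 - 1225 / 16384 * t ^ 8 : ℝ)| ≤ 1 := by
      rw [abs_le]; constructor <;> nlinarith
    nlinarith [pow_nonneg (abs_nonneg t) 10]
  nlinarith [abs_nonneg (c⁻¹ - stmt11p t)]

lemma stmt11_arsinh_bound {u : ℝ} (hu : |u| ≤ 1 / 2) :
    |Real.arsinh u - stmt11T u| ≤ |u| ^ 11 := by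
  have hIcc : Convex ℝ (Set.Icc (-|u|) |u|) := convex_Icc _ _
  have hd : ∀ x ∈ Set.Icc (-|u|) |u|,
      HasDerivWithinAt (fun t => Real.arsinh t - stmt11T t)
        ((Real.sqrt (1 + x ^ 2))⁻¹ - stmt11p x) (Set.Icc (-|u|) |u|) x := fun x _ =>
    ((Real.hasDerivAt_arsinh x).sub (stmt11T_hasDerivAt x)).hasDerivWithinAt
  have hbound : ∀ x ∈ Set.Icc (-|u|) |u|,
      ‖(Real.sqrt (1 + x ^ 2))⁻¹ - stmt11p x‖ ≤ |u| ^ 10 := by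
    intro x hx
    have hxu : |x| ≤ |u| := abs_le.mpr ⟨hx.1, hx.2⟩
    calc ‖(Real.sqrt (1 + x ^ 2))⁻¹ - stmt11p x‖ ≤ |x| ^ 10 :=
        stmt11_deriv_bound (hxu.trans hu)
      _ ≤ |u| ^ 10 := pow_le_pow_left₀ (abs_nonneg x) hxu 10
  have h0 : (0 : ℝ) ∈ Set.Icc (-|u|) |u| :=
    ⟨neg_nonpos.mpr (abs_nonneg u), abs_nonneg u⟩
  have hu' : u ∈ Set.Icc (-|u|) |u| := ⟨neg_abs_le u, le_abs_self u⟩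
  have key := hIcc.norm_image_sub_le_of_norm_hasDerivWithin_le hd hbound h0 hu'
  have hT0 : stmt11T 0 = 0 := by simp [stmt11T]
  simp only [Real.arsinh_zero, hT0, sub_zero, Real.norm_eq_abs] at key
  calc |Real.arsinh u - stmt11T u| ≤ |u| ^ 10 * |u| := key
    _ = |u| ^ 11 := by ring

set_option maxHeartbeats 2000000 in
lemma stmt11_m_bound {u : ℝ} (hu : |u| ≤ 1 / 2) :
    |u * Real.sqrt (1 + u ^ 2) - 2 * stmt11q u * Real.arsinh u| ≤ 3 * |u| ^ 11 := by
  rcases eq_or_ne u 0 with rfl | hu0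
  · simp [stmt11q]
  have ht2 : u ^ 2 ≤ 1 / 4 := by nlinarith [sq_abs u, abs_nonneg u]
  have h0 : (0 : ℝ) ≤ u ^ 2 := sq_nonneg u
  have n4 : (0:ℝ) ≤ u ^ 4 := by positivity
  have n6 : (0:ℝ) ≤ u ^ 6 := by positivity
  have n8 : (0:ℝ) ≤ u ^ 8 := by positivity
  have n10 : (0:ℝ) ≤ u ^ 10 := by positivity
  have n12 : (0:ℝ) ≤ u ^ 12 := by positivity
  have n14 : (0:ℝ) ≤ u ^ 14 := by positivity
  have n16 : (0:ℝ) ≤ u ^ 16 := by positivity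
  have n18 : (0:ℝ) ≤ u ^ 18 := by positivity
  have n20 : (0:ℝ) ≤ u ^ 20 := by positivity
  have n22 : (0:ℝ) ≤ u ^ 22 := by positivity
  have e2 : u ^ 2 ≤ 1 := by linarith
  have e4 : u ^ 4 ≤ 1 := by nlinarith
  have e6 : u ^ 6 ≤ 1 := by nlinarith
  have e8 : u ^ 8 ≤ 1 := by nlinarith
  have e10 : u ^ 10 ≤ 1 := by nlinarith
  have e12 : u ^ 12 ≤ 1 := by nlinarith
  have e14 : u ^ 14 ≤ 1 := by nlinarith
  have e16 : u ^ 16 ≤ 1 := by nlinarith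
  have e18 : u ^ 18 ≤ 1 := by nlinarith
  have e20 : u ^ 20 ≤ 1 := by nlinarith
  have e22 : u ^ 22 ≤ 1 := by nlinarith
  set c := Real.sqrt (1 + u ^ 2) with hc
  have hc2 : c ^ 2 = 1 + u ^ 2 := Real.sq_sqrt (by positivity)
  have hc1 : (1 : ℝ) ≤ c := by
    rw [show (1 : ℝ) = Real.sqrt 1 by simp, hc]
    exact Real.sqrt_le_sqrt (by nlinarith)
  have hq1 : |stmt11q u| ≤ 1 := by
    rw [abs_le]; unfold stmt11q; constructor <;> nlinarith
  have hqn : 0 ≤ stmt11q u := by unfold stmt11q; nlinarith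
  have e1 : (u * c - 2 * stmt11q u * stmt11T u) * (u * c + 2 * stmt11q u * stmt11T u) =
      u ^ 2 * (1 + u ^ 2) - 4 * (stmt11q u) ^ 2 * (stmt11T u) ^ 2 := by
    linear_combination u ^ 2 * hc2
  have e2' : u ^ 2 * (1 + u ^ 2) - 4 * (stmt11q u) ^ 2 * (stmt11T u) ^ 2 =
      u ^ 12 * stmt11R2 u := by
    unfold stmt11q stmt11T stmt11R2; ring
  have hR2 : |stmt11R2 u| ≤ 1 := by
    rw [abs_le]; unfold stmt11R2; constructor <;> linarith
  have hu4 : u ^ 4 ≤ u ^ 2 / 4 := by nlinarith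
  have hu8 : u ^ 8 ≤ u ^ 2 / 64 := by nlinarith
  have hTu : 0 ≤ stmt11T u * u := by unfold stmt11T; nlinarith
  have hlowmul : u ^ 2 ≤ (u * c + 2 * stmt11q u * stmt11T u) * u := by
    nlinarith [mul_nonneg h0 (by linarith : (0:ℝ) ≤ c - 1), mul_nonneg hqn hTu]
  have hup : (0 : ℝ) < |u| := abs_pos.mpr hu0
  have hlow : |u| ≤ |u * c + 2 * stmt11q u * stmt11T u| := by
    have h1 : (u * c + 2 * stmt11q u * stmt11T u) * u ≤
        |u * c + 2 * stmt11q u * stmt11T u| * |u| := by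
      rw [← abs_mul]; exact le_abs_self _
    have h2 : |u| * |u| ≤ |u * c + 2 * stmt11q u * stmt11T u| * |u| := by
      nlinarith [sq_abs u]
    exact le_of_mul_le_mul_right h2 hup
  have hprod : |u * c - 2 * stmt11q u * stmt11T u| * |u * c + 2 * stmt11q u * stmt11T u| ≤
      |u| ^ 12 := by
    rw [← abs_mul, e1, e2', abs_mul, abs_pow]
    nlinarith [pow_nonneg (abs_nonneg u) 12, abs_nonneg (stmt11R2 u)]
  have h11 : |u * c - 2 * stmt11q u * stmt11T u| ≤ |u| ^ 11 := by
    have h := mul_le_mul_of_nonneg_left hlow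
      (abs_nonneg (u * c - 2 * stmt11q u * stmt11T u))
    have h' : |u * c - 2 * stmt11q u * stmt11T u| * |u| ≤ |u| ^ 12 := h.trans hprod
    have h12 : |u| ^ 12 = |u| ^ 11 * |u| := by ring
    rw [h12] at h'
    exact le_of_mul_le_mul_right h' hup
  have hA := stmt11_arsinh_bound hu
  calc |u * c - 2 * stmt11q u * Real.arsinh u|
      = |(u * c - 2 * stmt11q u * stmt11T u) -
          2 * stmt11q u * (Real.arsinh u - stmt11T u)| := by congr 1; ring
    _ ≤ |u * c - 2 * stmt11q u * stmt11T u| +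
          |2 * stmt11q u * (Real.arsinh u - stmt11T u)| := abs_sub _ _
    _ ≤ 3 * |u| ^ 11 := by
        rw [abs_mul, abs_mul, abs_two]
        nlinarith [mul_le_mul hq1 hA (abs_nonneg _) (by norm_num : (0:ℝ) ≤ 1),
          abs_nonneg (stmt11q u), abs_nonneg (Real.arsinh u - stmt11T u),
          pow_nonneg (abs_nonneg u) 11, h11]

set_option maxHeartbeats 1000000 in
/-- For each fixed real `ε > 0`, as `z → 0` through nonzero real
values,
`√(z²+2ε)/(2 arsinh(z/√(2ε))) = ε/z + z/3 - z³/(45ε) + z⁵/(189ε²) - 23z⁷/(14175ε³) + O(z⁹)`. -/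
theorem stmt11 (ε : ℝ) (hε : 0 < ε) :
    (fun z : ℝ =>
        Real.sqrt (z ^ 2 + 2 * ε) / (2 * Real.arsinh (z / Real.sqrt (2 * ε))) -
          (ε / z + z / 3 - z ^ 3 / (45 * ε) + z ^ 5 / (189 * ε ^ 2) -
            23 * z ^ 7 / (14175 * ε ^ 3))) =O[𝓝[≠] (0 : ℝ)]
      fun z : ℝ => z ^ 9 := by
  have h2ε : (0 : ℝ) < 2 * ε := by linarith
  set s : ℝ := Real.sqrt (2 * ε) with hsdef
  have hs : 0 < s := Real.sqrt_pos.mpr h2ε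
  have hs2 : s ^ 2 = 2 * ε := Real.sq_sqrt h2ε.le
  have hεs : ε = s ^ 2 / 2 := by rw [hs2]; ring
  set g : ℝ → ℝ := fun z => Real.arsinh (z / s) with hgdef
  set M : ℝ → ℝ := fun z => z * Real.sqrt (z ^ 2 + 2 * ε) -
      2 * g z * (ε + z ^ 2 / 3 - z ^ 4 / (45 * ε) + z ^ 6 / (189 * ε ^ 2) -
        23 * z ^ 8 / (14175 * ε ^ 3)) with hMdef
  have hsqrt : ∀ z : ℝ, Real.sqrt (z ^ 2 + 2 * ε) = s * Real.sqrt (1 + (z / s) ^ 2) := by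
    intro z
    have h1 : z ^ 2 + 2 * ε = s ^ 2 * (1 + (z / s) ^ 2) := by
      rw [hεs]; field_simp; ring
    rw [h1, Real.sqrt_mul (sq_nonneg s), Real.sqrt_sq hs.le]
  have hMbound : ∀ z : ℝ, |z| ≤ s / 2 → |M z| ≤ 6 * ε / s ^ 11 * |z| ^ 11 := by
    intro z hz
    have hu : |z / s| ≤ 1 / 2 := by
      rw [abs_div, abs_of_pos hs, div_le_iff₀ hs]
      linarith
    have hm := stmt11_m_bound hu
    have hscale : M z = 2 * ε *
        (z / s * Real.sqrt (1 + (z / s) ^ 2) - 2 * stmt11q (z / s) * Real.arsinh (z / s)) := by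
      simp only [hMdef, hgdef]
      rw [hsqrt z, hεs]
      unfold stmt11q
      field_simp
      ring
    rw [hscale, abs_mul, abs_of_pos h2ε]
    have habs : |z / s| ^ 11 = |z| ^ 11 / s ^ 11 := by
      rw [abs_div, abs_of_pos hs, div_pow]
    rw [habs] at hm
    have hre : 2 * ε * (3 * (|z| ^ 11 / s ^ 11)) = 6 * ε / s ^ 11 * |z| ^ 11 := by
      field_simp; ring
    nlinarith [hm, h2ε]
  have hsmall : ∀ᶠ z : ℝ in 𝓝[≠] (0 : ℝ), |z| ≤ s / 2 := by
    have h := eventually_abs_sub_lt (0 : ℝ) (show (0:ℝ) < s / 2 by positivity)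
    refine (h.mono fun z hz => ?_).filter_mono nhdsWithin_le_nhds
    rw [sub_zero] at hz; linarith
  have hne : ∀ᶠ z : ℝ in 𝓝[≠] (0 : ℝ), z ≠ 0 :=
    eventually_mem_nhdsWithin.mono fun z hz => hz
  have hMO : M =O[𝓝[≠] (0 : ℝ)] fun z => z ^ 11 := by
    rw [Asymptotics.isBigO_iff]
    refine ⟨6 * ε / s ^ 11, ?_⟩
    filter_upwards [hsmall] with z hz
    simpa [Real.norm_eq_abs, abs_pow] using hMbound z hz
  have hgne : ∀ z : ℝ, z ≠ 0 → g z ≠ 0 := by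
    intro z hz
    simp only [hgdef]
    rw [Ne, Real.arsinh_eq_zero_iff, div_eq_zero_iff]
    push_neg
    exact ⟨hz, hs.ne'⟩
  have hg0 : g 0 = 0 := by simp [hgdef]
  have hdg : HasDerivAt g (1 / s) 0 := by
    have hinner : HasDerivAt (fun z : ℝ => z / s) (1 / s) 0 := by
      simpa using (hasDerivAt_id (0 : ℝ)).div_const s
    have h := (Real.hasDerivAt_arsinh ((0:ℝ) / s)).comp 0 hinner
    simp only [hgdef]
    refine h.congr_deriv ?_
    norm_num
  have hBO : (fun z : ℝ => z / g z) =O[𝓝[≠] (0 : ℝ)] fun _ => (1 : ℝ) := by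
    have ht := hasDerivAt_iff_tendsto_slope.mp hdg
    have ht2 : Tendsto (fun z => g z / z) (𝓝[≠] (0:ℝ)) (𝓝 (1 / s)) := by
      refine ht.congr fun z => ?_
      rw [slope_def_field, hg0, sub_zero, sub_zero]
    have ht3 : Tendsto (fun z => z / g z) (𝓝[≠] (0:ℝ)) (𝓝 s) := by
      have h := ht2.inv₀ (by positivity : (1 / s : ℝ) ≠ 0)
      simpa [inv_div, one_div, inv_inv] using h
    exact ht3.isBigO_one ℝ
  have hIO : (fun z : ℝ => (2 * z ^ 2)⁻¹) =O[𝓝[≠] (0 : ℝ)] fun z => (z ^ 2)⁻¹ := by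
    rw [Asymptotics.isBigO_iff]
    refine ⟨1 / 2, Eventually.of_forall fun z => ?_⟩
    rw [Real.norm_eq_abs, Real.norm_eq_abs, mul_inv, abs_mul]
    rw [show |(2:ℝ)⁻¹| = 1/2 by rw [abs_of_pos]; norm_num; norm_num]
  have hcomp := (hMO.mul hBO).mul hIO
  have htail : (fun z : ℝ => z ^ 11 * 1 * (z ^ 2)⁻¹) =O[𝓝[≠] (0 : ℝ)] fun z => z ^ 9 := by
    rw [Asymptotics.isBigO_iff]
    refine ⟨1, ?_⟩
    filter_upwards [hne] with z hz
    rw [show z ^ 11 * 1 * (z ^ 2)⁻¹ = z ^ 9 by field_simp]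
    simp
  refine (hcomp.trans htail).congr' ?_ EventuallyEq.rfl
  filter_upwards [hne] with z hz
  have hgz : g z ≠ 0 := hgne z hz
  have hε' : ε ≠ 0 := hε.ne'
  show M z * (z / g z) * (2 * z ^ 2)⁻¹ = _
  simp only [hMdef, hgdef] at *
  field_simp
end
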